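/- Every bounded action of a topological group G on a uniform space X by uniform isomorphisms is jointly continuous (as a map G × X → X, where X carries the uniform topology). -/

import Mathlib

/-- every bounded action of a topological group on a uniform space
by uniform isomorphisms is jointly continuous. -/
theorem bounded_action_continuous
    {G X : Type*} [Group G] [TopologicalSpace G] [IsTopologicalGroup G]
    [UniformSpace X] [MulAction G X]
    (hunif : ∀ g : G, UniformContinuous (fun x : X => g • x))
    (hbounded : ∀ U ∈ uniformity X, ∃ W ∈ nhds (1 : G),
      ∀ g ∈ W, ∀ x : X, (g • x, x) ∈ U) :
    Continuous (fun p : G × X => p.1 • p.2) := by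
  rw [continuous_iff_continuousAt]
  rintro ⟨g₀, x₀⟩
  rw [ContinuousAt, Uniform.tendsto_nhds_right]
  intro U hU
  obtain ⟨V, hV, hVsymm, hVU⟩ := comp_symm_mem_uniformity_sets hU
  obtain ⟨W, hW, hWb⟩ := hbounded V hV
  have hA : Filter.Tendsto (fun p : G × X => p.1 * g₀⁻¹) (nhds (g₀, x₀)) (nhds 1) := by
    have h : Filter.Tendsto (fun p : G × X => p.1 * g₀⁻¹) (nhds (g₀, x₀))
        (nhds (g₀ * g₀⁻¹)) := (continuous_fst.mul continuous_const).tendsto _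
    simpa using h
  have hB : Filter.Tendsto (fun p : G × X => g₀ • p.2) (nhds (g₀, x₀))
      (nhds (g₀ • x₀)) :=
    ((hunif g₀).continuous.tendsto x₀).comp continuous_snd.continuousAt
  rw [Uniform.tendsto_nhds_right] at hB
  have hB' : ∀ᶠ p : G × X in nhds (g₀, x₀), (g₀ • x₀, g₀ • p.2) ∈ V := hB hV
  rw [Filter.mem_map]
  filter_upwards [hA.eventually_mem hW, hB'] with p hp1 hp2
  apply hVU
  refine ⟨g₀ • p.2, hp2, ?_⟩
  have h3 := hWb _ hp1 (g₀ • p.2)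
  rw [smul_smul, inv_mul_cancel_right] at h3
  exact hVsymm.symm _ _ h3
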